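/- The language L' = { u^n 0^m h : n ≥ 2^m − 1 } fails the pumping property for context-free languages: for every p ≥ 1 there is a string s ∈ L' with |s| ≥ p such that for every decomposition s = r v w x y with |vwx| ≤ p and |vx| ≥ 1, there exists n ≥ 0 with r v^n w x^n y ∉ L'. -/

import Mathlib

inductive Alph : Type
  | u | z | h
deriving DecidableEq

/-- The regular language { u^n 0^m h : n, m ≥ 0 } (with `Alph.z` playing the role of `0`). -/
def Lu0h : Language Alph :=
  {w | ∃ n m : ℕ, w = List.replicate n Alph.u ++ List.replicate m Alph.z ++ [Alph.h]}

/-- The language L' = { u^n 0^m h : n ≥ 2^m − 1 }. -/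
def Lcc' : Language Alph :=
  {w | ∃ n m : ℕ, w = List.replicate n Alph.u ++ List.replicate m Alph.z ++ [Alph.h] ∧ 2 ^ m - 1 ≤ n}

/-- n-fold repetition of a word. -/
def listPow {α : Type*} (l : List α) (n : ℕ) : List α := (List.replicate n l).flatten

lemma count_listPow (a : Alph) (l : List Alph) (n : ℕ) :
    (listPow l n).count a = n * l.count a := by
  induction n with
  | zero => simp [listPow]
  | succ k ih =>
    have : listPow l (k + 1) = l ++ listPow l k := by
      simp [listPow, List.replicate_succ]
    rw [this, List.count_append, ih]
    ring

lemma counts_eq_length (l : List Alph) :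
    l.count Alph.u + l.count Alph.z + l.count Alph.h = l.length := by
  induction l with
  | nil => simp
  | cons a t ih => cases a <;> simp [List.count_cons] <;> omega

/-- L' fails the pumping property for context-free languages. -/
theorem Lcc'_fails_pumping :
    ∀ p : ℕ, 1 ≤ p → ∃ s ∈ Lcc', p ≤ s.length ∧
      ∀ r v w x y : List Alph, s = r ++ v ++ w ++ x ++ y →
        (v ++ w ++ x).length ≤ p → 1 ≤ (v ++ x).length →
        ∃ n : ℕ, r ++ listPow v n ++ w ++ listPow x n ++ y ∉ Lcc' := by
  intro p hp
  have hp2 : p < 2 ^ p := Nat.lt_two_pow_self (n := p)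
  refine ⟨List.replicate (2 ^ p - 1) Alph.u ++ List.replicate p Alph.z ++ [Alph.h],
    ⟨2 ^ p - 1, p, rfl, le_refl _⟩, ?_, ?_⟩
  · simp
    omega
  · intro r v w x y hs hvwx hvx
    -- counts of the original string
    have hcu := congrArg (List.count Alph.u) hs
    have hcz := congrArg (List.count Alph.z) hs
    have hch := congrArg (List.count Alph.h) hs
    simp [List.count_append, List.count_replicate, List.count_singleton] at hcu hcz hch
    -- length bounds
    have hlv := counts_eq_length v
    have hlx := counts_eq_length x
    have hlw := counts_eq_length w
    simp [List.length_append] at hvwx hvx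
    by_cases hH : v.count Alph.h + x.count Alph.h = 0
    · by_cases hZ : v.count Alph.z + x.count Alph.z = 0
      · -- only u's in v and x: pump down to n = 0
        refine ⟨0, ?_⟩
        rintro ⟨N, M, heq, hle⟩
        have h1 := congrArg (List.count Alph.u) heq
        have h2 := congrArg (List.count Alph.z) heq
        simp [List.count_append, List.count_replicate, List.count_singleton,
          count_listPow, listPow] at h1 h2
        have hMp : M = p := by omega
        subst hMp
        omega
      · -- v or x contains a z: pump up to n = 2
        refine ⟨2, ?_⟩
        rintro ⟨N, M, heq, hle⟩
        have h1 := congrArg (List.count Alph.u) heq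
        have h2 := congrArg (List.count Alph.z) heq
        simp [List.count_append, List.count_replicate, List.count_singleton,
          count_listPow] at h1 h2
        -- M = p + (z-count of v and x), N = 2^p - 1 + (u-count of v and x)
        have hM : p + 1 ≤ M := by omega
        have hpow : 2 ^ (p + 1) ≤ 2 ^ M := Nat.pow_le_pow_right (by norm_num) hM
        have hpow' : 2 * 2 ^ p ≤ 2 ^ M := by
          calc 2 * 2 ^ p = 2 ^ (p + 1) := by ring
            _ ≤ 2 ^ M := hpow
        clear hpow hM hs heq hH hZ
        generalize hgp : 2 ^ p = A at *
        generalize hgM : 2 ^ M = B at *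
        omega
    · -- v or x contains the h: pump down to n = 0
      refine ⟨0, ?_⟩
      rintro ⟨N, M, heq, hle⟩
      have h3 := congrArg (List.count Alph.h) heq
      simp [List.count_append, List.count_replicate, List.count_singleton,
        count_listPow, listPow] at h3
      omega
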